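/- Let X be a random variable (continuous or discrete), Y a random variable with finite outcome set 𝒴, and let T be a discrete random variable satisfying the Markov condition Y − X − T with H(T) = r. Then for every r' ≥ r there exists a discrete random variable T' satisfying the Markov condition Y − X − T' with H(T') = r' and I(Y;T') = I(Y;T). Consequently the deterministic-IB curve F_dIB(r) := sup{ I(Y;T) : Y − X − T Markov, T discrete, H(T) ≤ r } is monotonically nondecreasing in r, and the inequality constraint H(T) ≤ r may be replaced by the equality constraint H(T) = r without changing F_dIB. -/

import Mathlib

noncomputable section

/-- `p` is a joint probability distribution on the finite product `A × B`. -/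
def IsJoint {A B : Type*} [Fintype A] [Fintype B] (p : A → B → ℝ) : Prop :=
  (∀ a b, 0 ≤ p a b) ∧ (∑ a, ∑ b, p a b) = 1

/-- `κ` is a channel (conditional distribution) from `A` to the finite type `B`. -/
def IsChannel {A B : Type*} [Fintype B] (κ : A → B → ℝ) : Prop :=
  ∀ a, (∀ b, 0 ≤ κ a b) ∧ (∑ b, κ a b) = 1

/-- Marginal distribution of the first coordinate. -/
def margFst {A B : Type*} [Fintype B] (p : A → B → ℝ) : A → ℝ := fun a => ∑ b, p a b

/-- Marginal distribution of the second coordinate. -/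
def margSnd {A B : Type*} [Fintype A] (p : A → B → ℝ) : B → ℝ := fun b => ∑ a, p a b

/-- ℓ1 distance between two joint distributions. -/
def l1 {A B : Type*} [Fintype A] [Fintype B] (p q : A → B → ℝ) : ℝ :=
  ∑ a, ∑ b, |p a b - q a b|

/-- Shannon entropy of a distribution on a finite type. -/
def ent {A : Type*} [Fintype A] (q : A → ℝ) : ℝ := -∑ a, q a * Real.log (q a)

/-- Conditional entropy `H(B | A)` of the second coordinate given the first. -/
def condEnt {A B : Type*} [Fintype A] [Fintype B] (p : A → B → ℝ) : ℝ :=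
  -∑ a, ∑ b, p a b * Real.log (p a b / margFst p a)

/-- Mutual information `I(A;B)` of a joint distribution, as `H(B) - H(B|A)`. -/
def mi {A B : Type*} [Fintype A] [Fintype B] (p : A → B → ℝ) : ℝ :=
  ent (margSnd p) - condEnt p

/-- Joint distribution of `(X,T)` when `T` is generated from `X` via channel `κ`
(so that the Markov condition `Y - X - T` holds). -/
def jointXT {X Y T : Type*} [Fintype Y] (p : X → Y → ℝ) (κ : X → T → ℝ) : X → T → ℝ :=
  fun x t => (∑ y, p x y) * κ x t

/-- Joint distribution of `(T,Y)` when `T` is generated from `X` via channel `κ`. -/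
def jointTY {X Y T : Type*} [Fintype X] (p : X → Y → ℝ) (κ : X → T → ℝ) : T → Y → ℝ :=
  fun t y => ∑ x, p x y * κ x t

/-- Joint distribution of `(Y,T)` when `T` is generated from `X` via channel `κ`. -/
def jointYT {X Y T : Type*} [Fintype X] (p : X → Y → ℝ) (κ : X → T → ℝ) : Y → T → ℝ :=
  fun y t => ∑ x, p x y * κ x t

/-- The information-bottleneck curve `F(r)`: the supremum of `I(Y;T)` over all (discrete)
bottleneck variables `T` obeying the Markov condition `Y - X - T` with `I(X;T) ≤ r`. -/
def IBcurve {X Y : Type*} [Fintype X] [Fintype Y] (p : X → Y → ℝ) (r : ℝ) : ℝ :=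
  sSup { v : ℝ | ∃ (n : ℕ) (κ : X → Fin n → ℝ), IsChannel κ ∧
    mi (jointXT p κ) ≤ r ∧ v = mi (jointTY p κ) }

/-- `Y` is the deterministic function `f` of `X` under the joint distribution `p`:
given `X = x`, all conditional mass is on `f x`. -/
def Determ {X Y : Type*} (p : X → Y → ℝ) (f : X → Y) : Prop :=
  ∀ x y, y ≠ f x → p x y = 0

/-- The deterministic-IB curve: supremum of `I(Y;T)` over (discrete) bottleneck variables
`T` obeying `Y - X - T` with `H(T) ≤ r`. -/
def FdIB {X Y : Type*} [Fintype X] [Fintype Y] (p : X → Y → ℝ) (r : ℝ) : ℝ :=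
  sSup { v : ℝ | ∃ (n : ℕ) (κ : X → Fin n → ℝ), IsChannel κ ∧
    ent (margSnd (jointXT p κ)) ≤ r ∧ v = mi (jointYT p κ) }

/-- The deterministic-IB curve with the equality constraint `H(T) = r`. -/
def FdIBeq {X Y : Type*} [Fintype X] [Fintype Y] (p : X → Y → ℝ) (r : ℝ) : ℝ :=
  sSup { v : ℝ | ∃ (n : ℕ) (κ : X → Fin n → ℝ), IsChannel κ ∧
    ent (margSnd (jointXT p κ)) = r ∧ v = mi (jointYT p κ) }

section DIBAux

open Finset

lemma mul_mul_log_mul (x y : ℝ) :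
    x * y * Real.log (x * y) = x * y * Real.log x + x * y * Real.log y := by
  rcases eq_or_ne x 0 with h | h
  · simp [h]
  rcases eq_or_ne y 0 with h' | h'
  · simp [h']
  rw [Real.log_mul h h']; ring

lemma ent_prod {A B : Type*} [Fintype A] [Fintype B] (f : A → ℝ) (g : B → ℝ)
    (hf : ∑ a, f a = 1) (hg : ∑ b, g b = 1) :
    ent (fun ab : A × B => f ab.1 * g ab.2) = ent f + ent g := by
  unfold ent
  rw [Fintype.sum_prod_type]
  have key : ∀ (a : A) (b : B), f a * g b * Real.log (f a * g b)
      = (f a * Real.log (f a)) * g b + f a * (g b * Real.log (g b)) := by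
    intro a b; rw [mul_mul_log_mul]; ring
  simp_rw [key, Finset.sum_add_distrib, ← Finset.mul_sum, hg, mul_one]
  rw [← Finset.sum_mul, hf, one_mul]
  ring

lemma cond_term (J q M : ℝ) (hJ : 0 ≤ J) (hJM : J ≤ M) (hq : 0 ≤ q) :
    J * q * Real.log (J * q / M) = q * (J * Real.log (J / M)) + J * (q * Real.log q) := by
  rcases eq_or_ne J 0 with h | h
  · simp [h]
  rcases eq_or_ne q 0 with h' | h'
  · simp [h']
  have hJ' : 0 < J := hJ.lt_of_ne' h
  have hM : 0 < M := lt_of_lt_of_le hJ' hJM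
  rw [show J * q / M = (J / M) * q by ring, Real.log_mul (by positivity) h']
  ring

lemma margSnd_le {A B : Type*} [Fintype A] [Fintype B] (J : A → B → ℝ)
    (hJ : ∀ a b, 0 ≤ J a b) (a : A) (b : B) : J a b ≤ margSnd J b :=
  Finset.single_le_sum (fun a' _ => hJ a' b) (Finset.mem_univ a)

lemma margFst_le {A B : Type*} [Fintype A] [Fintype B] (J : A → B → ℝ)
    (hJ : ∀ a b, 0 ≤ J a b) (a : A) (b : B) : J a b ≤ margFst J a :=
  Finset.single_le_sum (fun b' _ => hJ a b') (Finset.mem_univ b)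

lemma mi_prod {Yt T U : Type*} [Fintype Yt] [Fintype T] [Fintype U]
    (J : Yt → T → ℝ) (q : U → ℝ) (hJ : ∀ y t, 0 ≤ J y t) (hq : ∀ u, 0 ≤ q u)
    (hq1 : ∑ u, q u = 1) (hJ1 : ∑ y, ∑ t, J y t = 1) :
    mi (fun y (tu : T × U) => J y tu.1 * q tu.2) = mi J := by
  have hJT1 : ∑ t, margSnd J t = 1 := by
    rw [← hJ1, Finset.sum_comm]; rfl
  have hmargSnd : margSnd (fun y (tu : T × U) => J y tu.1 * q tu.2)
      = fun tu : T × U => margSnd J tu.1 * q tu.2 := by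
    funext tu
    simp only [margSnd, ← Finset.sum_mul]
  have hmargFst : margFst (fun y (tu : T × U) => J y tu.1 * q tu.2) = margFst J := by
    funext y
    simp only [margFst, Fintype.sum_prod_type, ← Finset.mul_sum, hq1, mul_one]
  have hcond : condEnt (fun y (tu : T × U) => J y tu.1 * q tu.2) = condEnt J + ent q := by
    unfold condEnt
    rw [hmargFst]
    have key : ∀ (y : Yt) (tu : T × U),
        J y tu.1 * q tu.2 * Real.log (J y tu.1 * q tu.2 / margFst J y)
        = q tu.2 * (J y tu.1 * Real.log (J y tu.1 / margFst J y))
          + J y tu.1 * (q tu.2 * Real.log (q tu.2)) := fun y tu =>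
      cond_term _ _ _ (hJ y tu.1) (margFst_le J hJ y tu.1) (hq tu.2)
    simp_rw [key, Fintype.sum_prod_type]
    simp_rw [Finset.sum_add_distrib, ← Finset.sum_mul, ← Finset.mul_sum, hq1]
    unfold ent
    have hS : ∑ x : Yt, ∑ x1 : T, (J x x1 * ∑ u, q u * Real.log (q u))
        = ∑ u, q u * Real.log (q u) := by
      simp_rw [← Finset.sum_mul]
      rw [hJ1, one_mul]
    rw [hS]
    ring
  unfold mi
  rw [hcond, hmargSnd, ent_prod (margSnd J) q hJT1 hq1]
  ring

lemma ent_comp_equiv {A A' : Type*} [Fintype A] [Fintype A'] (e : A' ≃ A) (f : A → ℝ) :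
    ent (fun a' => f (e a')) = ent f := by
  unfold ent
  rw [Equiv.sum_comp e (fun a => f a * Real.log (f a))]

lemma mi_comp_equiv {Yt A A' : Type*} [Fintype Yt] [Fintype A] [Fintype A'] (e : A' ≃ A)
    (J : Yt → A → ℝ) : mi (fun y a' => J y (e a')) = mi J := by
  have hF : margFst (fun y a' => J y (e a')) = margFst J := by
    funext y; exact Equiv.sum_comp e (fun a => J y a)
  unfold mi condEnt
  rw [hF]
  have hS : margSnd (fun y a' => J y (e a')) = fun a' => margSnd J (e a') := rfl
  rw [hS, ent_comp_equiv e (margSnd J)]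
  congr 1
  refine congrArg Neg.neg (Finset.sum_congr rfl fun y _ => ?_)
  exact Equiv.sum_comp e (fun a => J y a * Real.log (J y a / margFst J y))

lemma mi_le_ent_margFst {A B : Type*} [Fintype A] [Fintype B] (J : A → B → ℝ)
    (hJ : ∀ a b, 0 ≤ J a b) : mi J ≤ ent (margFst J) := by
  have h1 : ent (margSnd J) = -∑ a, ∑ b, J a b * Real.log (margSnd J b) := by
    unfold ent
    rw [Finset.sum_comm]
    congr 1
    refine Finset.sum_congr rfl fun b _ => ?_
    rw [margSnd, Finset.sum_mul]
  have h2 : ent (margFst J) = -∑ a, ∑ b, J a b * Real.log (margFst J a) := by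
    unfold ent
    congr 1
    refine Finset.sum_congr rfl fun a _ => ?_
    rw [margFst, Finset.sum_mul]
  unfold mi condEnt
  rw [h1, h2]
  have : ∀ a b, J a b * Real.log (J a b / margFst J a)
      ≤ J a b * Real.log (margSnd J b) - J a b * Real.log (margFst J a) := by
    intro a b
    rcases eq_or_ne (J a b) 0 with h | h
    · simp [h]
    have hJ' : 0 < J a b := (hJ a b).lt_of_ne' h
    have hN : 0 < margFst J a := lt_of_lt_of_le hJ' (margFst_le J hJ a b)
    have hM : 0 < margSnd J b := lt_of_lt_of_le hJ' (margSnd_le J hJ a b)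
    rw [Real.log_div h hN.ne']
    have hl : J a b * Real.log (J a b / margSnd J b) ≤ 0 :=
      mul_nonpos_of_nonneg_of_nonpos (hJ a b)
        (Real.log_nonpos (by positivity) ((div_le_one hM).2 (margSnd_le J hJ a b)))
    rw [Real.log_div h hM.ne'] at hl
    nlinarith
  have hsum : ∑ a, ∑ b, J a b * Real.log (J a b / margFst J a)
      ≤ ∑ a, ∑ b, (J a b * Real.log (margSnd J b) - J a b * Real.log (margFst J a)) :=
    Finset.sum_le_sum fun a _ => Finset.sum_le_sum fun b _ => this a b
  simp only [Finset.sum_sub_distrib] at hsum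
  linarith

lemma ent_nonneg {A : Type*} [Fintype A] (f : A → ℝ) (h0 : ∀ a, 0 ≤ f a)
    (h1 : ∑ a, f a = 1) : 0 ≤ ent f := by
  unfold ent
  rw [neg_nonneg]
  refine Finset.sum_nonpos fun a _ => ?_
  refine mul_nonpos_of_nonneg_of_nonpos (h0 a) (Real.log_nonpos (h0 a) ?_)
  rw [← h1]
  exact Finset.single_le_sum (fun a' _ => h0 a') (Finset.mem_univ a)

end DIBAux

section DIBSplit

open Finset

lemma sum_margSnd_jointXT {X Y T : Type*} [Fintype X] [Fintype Y] [Fintype T]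
    (p : X → Y → ℝ) (hp : IsJoint p) (κ : X → T → ℝ) (hκ : IsChannel κ) :
    ∑ t, margSnd (jointXT p κ) t = 1 := by
  unfold margSnd jointXT
  rw [Finset.sum_comm]
  calc ∑ x, ∑ t, (∑ y, p x y) * κ x t
      = ∑ x, (∑ y, p x y) * ∑ t, κ x t := by
        refine Finset.sum_congr rfl fun x _ => ?_; rw [Finset.mul_sum]
    _ = 1 := by simp_rw [fun x => (hκ x).2, mul_one]; exact hp.2

lemma margSnd_jointXT_nonneg {X Y T : Type*} [Fintype X] [Fintype Y] [Fintype T]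
    (p : X → Y → ℝ) (hp : IsJoint p) (κ : X → T → ℝ) (hκ : IsChannel κ) (t : T) :
    0 ≤ margSnd (jointXT p κ) t :=
  Finset.sum_nonneg fun x _ => mul_nonneg (Finset.sum_nonneg fun y _ => hp.1 x y) ((hκ x).1 t)

lemma sum_jointYT {X Y T : Type*} [Fintype X] [Fintype Y] [Fintype T]
    (p : X → Y → ℝ) (hp : IsJoint p) (κ : X → T → ℝ) (hκ : IsChannel κ) :
    ∑ y, ∑ t, jointYT p κ y t = 1 := by
  unfold jointYT
  calc ∑ y, ∑ t, ∑ x, p x y * κ x t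
      = ∑ y, ∑ x, p x y * ∑ t, κ x t := by
        refine Finset.sum_congr rfl fun y _ => ?_
        rw [Finset.sum_comm]
        exact Finset.sum_congr rfl fun x _ => (Finset.mul_sum _ _ _).symm
    _ = 1 := by
        simp_rw [fun x => (hκ x).2, mul_one]
        rw [Finset.sum_comm]; exact hp.2

lemma jointYT_nonneg {X Y T : Type*} [Fintype X] [Fintype Y] [Fintype T]
    (p : X → Y → ℝ) (hp : IsJoint p) (κ : X → T → ℝ) (hκ : IsChannel κ) (y : Y) (t : T) :
    0 ≤ jointYT p κ y t :=
  Finset.sum_nonneg fun x _ => mul_nonneg (hp.1 x y) ((hκ x).1 t)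

lemma margFst_jointYT {X Y T : Type*} [Fintype X] [Fintype Y] [Fintype T]
    (p : X → Y → ℝ) (κ : X → T → ℝ) (hκ : IsChannel κ) :
    margFst (jointYT p κ) = fun y => ∑ x, p x y := by
  funext y
  unfold margFst jointYT
  rw [Finset.sum_comm]
  refine Finset.sum_congr rfl fun x _ => ?_
  rw [← Finset.mul_sum, (hκ x).2, mul_one]

/-- The splitting construction: raise `H(T)` to any `r'` above its current value while
keeping `I(Y;T)` fixed. -/
lemma split_channel {X Y : Type*} [Fintype X] [Fintype Y] (p : X → Y → ℝ) (hp : IsJoint p)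
    {T : Type*} [Fintype T] (κ : X → T → ℝ) (hκ : IsChannel κ) (r' : ℝ)
    (hr' : ent (margSnd (jointXT p κ)) ≤ r') :
    ∃ (n : ℕ) (κ' : X → Fin n → ℝ), IsChannel κ' ∧
      ent (margSnd (jointXT p κ')) = r' ∧ mi (jointYT p κ') = mi (jointYT p κ) := by
  set d := r' - ent (margSnd (jointXT p κ)) with hd
  have hd0 : 0 ≤ d := by simp [hd]; linarith
  set m : ℕ := ⌈Real.exp d⌉₊ with hm
  have hm1 : (0:ℝ) < (m:ℝ) + 1 := by positivity
  have hdm : d ≤ Real.log ((m:ℝ) + 1) := by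
    have h1 : Real.exp d ≤ (m:ℝ) := Nat.le_ceil _
    calc d = Real.log (Real.exp d) := (Real.log_exp d).symm
      _ ≤ Real.log ((m:ℝ) + 1) := Real.log_le_log (Real.exp_pos d) (by linarith)
  -- the interpolating distribution on Fin (m+1)
  set q : ℝ → Fin (m+1) → ℝ := fun l u => l / ((m:ℝ)+1) + if u = 0 then 1 - l else 0 with hq
  have hqsum : ∀ l : ℝ, ∑ u, q l u = 1 := by
    intro l
    rw [Finset.sum_add_distrib]
    simp [Finset.sum_ite_eq', Finset.card_univ]
    field_simp
    ring
  have hqnn : ∀ l ∈ Set.Icc (0:ℝ) 1, ∀ u, 0 ≤ q l u := by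
    intro l hl u
    rcases hl with ⟨h0, h1⟩
    have hdiv : 0 ≤ l / ((m:ℝ)+1) := by positivity
    by_cases h : u = 0 <;> simp [hq, h] <;> linarith
  have hq0 : ent (q 0) = 0 := by
    have : ∀ u : Fin (m+1), q 0 u * Real.log (q 0 u) = 0 := by
      intro u
      by_cases h : u = 0 <;> simp [hq, h]
    simp [ent, this]
  have hq1 : ent (q 1) = Real.log ((m:ℝ)+1) := by
    have hv : ∀ u : Fin (m+1), q 1 u = 1 / ((m:ℝ)+1) := by
      intro u; by_cases h : u = 0 <;> simp [hq, h]
    simp only [ent, hv]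
    rw [Finset.sum_const, Finset.card_univ]
    simp only [Fintype.card_fin, nsmul_eq_mul]
    rw [Real.log_div one_ne_zero hm1.ne', Real.log_one]
    push_cast
    field_simp
    ring
  have hcont : ContinuousOn (fun l => ent (q l)) (Set.Icc 0 1) := by
    apply Continuous.continuousOn
    unfold ent
    apply Continuous.neg
    apply continuous_finset_sum
    intro u _
    have hc : Continuous fun l => q l u := by
      by_cases h : u = 0 <;> simp only [hq, h, if_pos, if_neg, ite_true, ite_false] <;> fun_prop
    exact Real.continuous_mul_log.comp hc
  have hmem : d ∈ Set.Icc (ent (q 0)) (ent (q 1)) := by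
    rw [hq0, hq1]; exact ⟨hd0, hdm⟩
  obtain ⟨l, hl, hentl'⟩ := intermediate_value_Icc (by norm_num : (0:ℝ) ≤ 1) hcont hmem
  have hentl : ent (q l) = d := hentl'
  -- the product channel
  set κ₂ : X → (T × Fin (m+1)) → ℝ := fun x tu => κ x tu.1 * q l tu.2 with hκ₂
  have hκ₂ch : IsChannel κ₂ := by
    intro x
    constructor
    · intro tu
      exact mul_nonneg ((hκ x).1 tu.1) (hqnn l hl tu.2)
    · rw [Fintype.sum_prod_type]
      have hrow : ∀ t : T, ∑ u, κ₂ x (t, u) = κ x t := by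
        intro t
        simp only [hκ₂]
        rw [← Finset.mul_sum, hqsum l, mul_one]
      simp_rw [hrow]
      exact (hκ x).2
  have hXT : jointXT p κ₂ = fun x (tu : T × Fin (m+1)) => jointXT p κ x tu.1 * q l tu.2 := by
    funext x tu
    show (∑ y, p x y) * (κ x tu.1 * q l tu.2) = ((∑ y, p x y) * κ x tu.1) * q l tu.2
    ring
  have hmargXT : margSnd (jointXT p κ₂)
      = fun tu : T × Fin (m+1) => margSnd (jointXT p κ) tu.1 * q l tu.2 := by
    rw [hXT]; funext tu
    show ∑ x, jointXT p κ x tu.1 * q l tu.2 = (∑ x, jointXT p κ x tu.1) * q l tu.2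
    exact (Finset.sum_mul _ _ _).symm
  have hentXT : ent (margSnd (jointXT p κ₂)) = r' := by
    rw [hmargXT, ent_prod _ _ (sum_margSnd_jointXT p hp κ hκ) (hqsum l), hentl]
    simp [hd]
  have hYT : jointYT p κ₂ = fun y (tu : T × Fin (m+1)) => jointYT p κ y tu.1 * q l tu.2 := by
    funext y tu
    show ∑ x, p x y * (κ x tu.1 * q l tu.2) = (∑ x, p x y * κ x tu.1) * q l tu.2
    rw [Finset.sum_mul]
    exact Finset.sum_congr rfl fun x _ => by ring
  have hmi : mi (jointYT p κ₂) = mi (jointYT p κ) := by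
    rw [hYT]
    exact mi_prod _ _ (jointYT_nonneg p hp κ hκ) (hqnn l hl) (hqsum l)
      (sum_jointYT p hp κ hκ)
  -- reindex to Fin n
  set n := Fintype.card (T × Fin (m+1)) with hn
  set e : Fin n ≃ T × Fin (m+1) := (Fintype.equivFin (T × Fin (m+1))).symm with he
  refine ⟨n, fun x i => κ₂ x (e i), fun x => ⟨fun i => (hκ₂ch x).1 (e i), ?_⟩, ?_, ?_⟩
  · rw [Equiv.sum_comp e (κ₂ x)]
    exact (hκ₂ch x).2
  · have : margSnd (jointXT p (fun x i => κ₂ x (e i)))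
        = fun i => margSnd (jointXT p κ₂) (e i) := rfl
    rw [this, ent_comp_equiv e (margSnd (jointXT p κ₂)), hentXT]
  · have : jointYT p (fun x i => κ₂ x (e i)) = fun y i => jointYT p κ₂ y (e i) := rfl
    rw [this, mi_comp_equiv e (jointYT p κ₂), hmi]

end DIBSplit

section DIBMain

open Finset

lemma FdIB_bdd {X Y : Type*} [Fintype X] [Fintype Y] (p : X → Y → ℝ) (hp : IsJoint p)
    (r : ℝ) :
    BddAbove { v : ℝ | ∃ (n : ℕ) (κ : X → Fin n → ℝ), IsChannel κ ∧
      ent (margSnd (jointXT p κ)) ≤ r ∧ v = mi (jointYT p κ) } := by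
  refine ⟨ent (fun y => ∑ x, p x y), ?_⟩
  rintro v ⟨n, κ, hκ, _, rfl⟩
  calc mi (jointYT p κ) ≤ ent (margFst (jointYT p κ)) :=
        mi_le_ent_margFst _ (jointYT_nonneg p hp κ hκ)
    _ = _ := by rw [margFst_jointYT p κ hκ]

lemma FdIB_zero_mem {X Y : Type*} [Fintype X] [Fintype Y] (p : X → Y → ℝ) (hp : IsJoint p)
    (r : ℝ) (hr : 0 ≤ r) :
    (0:ℝ) ∈ { v : ℝ | ∃ (n : ℕ) (κ : X → Fin n → ℝ), IsChannel κ ∧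
      ent (margSnd (jointXT p κ)) ≤ r ∧ v = mi (jointYT p κ) } := by
  refine ⟨1, fun _ _ => 1, fun x => ⟨fun _ => zero_le_one, by simp⟩, ?_, ?_⟩
  · have hm : margSnd (jointXT p (fun (_ : X) (_ : Fin 1) => (1:ℝ))) = fun _ => 1 := by
      funext t
      show ∑ x, (∑ y, p x y) * 1 = 1
      simp only [mul_one]
      exact hp.2
    rw [hm]
    have : ent (fun _ : Fin 1 => (1:ℝ)) = 0 := by simp [ent]
    rw [this]; exact hr
  · have hJ : jointYT p (fun (_ : X) (_ : Fin 1) => (1:ℝ)) = fun y (_ : Fin 1) => ∑ x, p x y := by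
      funext y t
      show ∑ x, p x y * 1 = ∑ x, p x y
      simp
    rw [hJ]
    have hms : margSnd (fun y (_ : Fin 1) => ∑ x, p x y) = fun _ => 1 := by
      funext t
      show ∑ y, ∑ x, p x y = 1
      rw [Finset.sum_comm]; exact hp.2
    have hmf : margFst (fun y (_ : Fin 1) => ∑ x, p x y) = fun y => ∑ x, p x y := by
      funext y
      show ∑ _t : Fin 1, (∑ x, p x y) = ∑ x, p x y
      simp
    unfold mi
    rw [hms]
    have h1 : ent (fun _ : Fin 1 => (1:ℝ)) = 0 := by simp [ent]
    have h2 : condEnt (fun y (_ : Fin 1) => ∑ x, p x y) = 0 := by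
      unfold condEnt
      rw [hmf]
      have hzero : ∀ y : Y, (∑ x, p x y) * Real.log ((∑ x, p x y) / (∑ x, p x y)) = 0 := by
        intro y
        rcases eq_or_ne (∑ x, p x y) 0 with h | h
        · simp [h]
        · rw [div_self h, Real.log_one, mul_zero]
      simp [hzero]
    rw [h1, h2]; ring

lemma FdIB_empty {X Y : Type*} [Fintype X] [Fintype Y] (p : X → Y → ℝ) (hp : IsJoint p)
    (r : ℝ) (hr : r < 0) :
    { v : ℝ | ∃ (n : ℕ) (κ : X → Fin n → ℝ), IsChannel κ ∧
      ent (margSnd (jointXT p κ)) ≤ r ∧ v = mi (jointYT p κ) } = ∅ := by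
  ext v
  simp only [Set.mem_setOf_eq, Set.mem_empty_iff_false, iff_false]
  rintro ⟨n, κ, hκ, hle, -⟩
  have h0 : 0 ≤ ent (margSnd (jointXT p κ)) :=
    ent_nonneg _ (margSnd_jointXT_nonneg p hp κ hκ) (sum_margSnd_jointXT p hp κ hκ)
  linarith

end DIBMain


/-- For a discrete bottleneck variable `T` obeying `Y - X - T` with
`H(T) = r`, every `r' ≥ r` is achieved by some discrete `T'` obeying `Y - X - T'` with
`H(T') = r'` and `I(Y;T') = I(Y;T)`.  Consequently the dIB curve `F_dIB` is monotonically
nondecreasing in `r`, and the inequality constraint `H(T) ≤ r` can be replaced by the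
equality constraint `H(T) = r` without changing `F_dIB`. -/
theorem dIB_equality_constraint {X Y T : Type*} [Fintype X] [Fintype Y] [Fintype T]
    (p : X → Y → ℝ) (hp : IsJoint p)
    (κ : X → T → ℝ) (hκ : IsChannel κ) (r : ℝ)
    (hr : ent (margSnd (jointXT p κ)) = r) :
    (∀ r' ≥ r, ∃ (n : ℕ) (κ' : X → Fin n → ℝ), IsChannel κ' ∧
        ent (margSnd (jointXT p κ')) = r' ∧
        mi (jointYT p κ') = mi (jointYT p κ)) ∧
    (∀ r₁ r₂ : ℝ, r₁ ≤ r₂ → FdIB p r₁ ≤ FdIB p r₂) ∧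
    (∀ s : ℝ, FdIB p s = FdIBeq p s) := by
  refine ⟨?_, ?_, ?_⟩
  · intro r' hr'
    exact split_channel p hp κ hκ r' (by rw [hr]; exact hr')
  · intro r₁ r₂ h12
    by_cases h1 : 0 ≤ r₁
    · refine csSup_le_csSup (FdIB_bdd p hp r₂) ⟨0, FdIB_zero_mem p hp r₁ h1⟩ ?_
      rintro v ⟨n, κ', hch, hle, hv⟩
      exact ⟨n, κ', hch, hle.trans h12, hv⟩
    · have he1 : FdIB p r₁ = 0 := by
        unfold FdIB
        rw [FdIB_empty p hp r₁ (lt_of_not_ge h1), Real.sSup_empty]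
      rw [he1]
      by_cases h2 : 0 ≤ r₂
      · exact le_csSup (FdIB_bdd p hp r₂) (FdIB_zero_mem p hp r₂ h2)
      · have he2 : FdIB p r₂ = 0 := by
          unfold FdIB
          rw [FdIB_empty p hp r₂ (lt_of_not_ge h2), Real.sSup_empty]
        rw [he2]
  · intro s
    have hset : { v : ℝ | ∃ (n : ℕ) (κ' : X → Fin n → ℝ), IsChannel κ' ∧
          ent (margSnd (jointXT p κ')) ≤ s ∧ v = mi (jointYT p κ') }
        = { v : ℝ | ∃ (n : ℕ) (κ' : X → Fin n → ℝ), IsChannel κ' ∧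
          ent (margSnd (jointXT p κ')) = s ∧ v = mi (jointYT p κ') } := by
      ext v
      constructor
      · rintro ⟨n, κ', hch, hle, rfl⟩
        obtain ⟨n', κ'', hch'', hent'', hmi''⟩ := split_channel p hp κ' hch s hle
        exact ⟨n', κ'', hch'', hent'', hmi''.symm⟩
      · rintro ⟨n, κ', hch, heq, hv⟩
        exact ⟨n, κ', hch, heq.le, hv⟩
    unfold FdIB FdIBeq
    rw [hset]
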